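/- Let c ∈ (0, 1/2] and let h ≥ 1 be a real number. Set γ := c^{1/h} and H := h · ln(16h/c) / ln(1/c). Then γ^{H+1}/(1−γ) ≤ c/8. -/

import Mathlib

theorem escape_tail_bound (c h : ℝ) (hc0 : 0 < c) (hc1 : c ≤ 1 / 2) (hh : 1 ≤ h) :
    (c ^ (1 / h)) ^ (h * Real.log (16 * h / c) / Real.log (1 / c) + 1) /
      (1 - c ^ (1 / h)) ≤ c / 8 := by
  have hh0 : (0:ℝ) < h := lt_of_lt_of_le one_pos hh
  have hc1' : c < 1 := lt_of_le_of_lt hc1 (by norm_num)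
  have hlogc : Real.log c < 0 := Real.log_neg hc0 hc1'
  have hlogc' : Real.log c ≠ 0 := ne_of_lt hlogc
  set γ := c ^ (1/h) with hγdef
  have hγ0 : 0 < γ := Real.rpow_pos_of_pos hc0 _
  have hγ1 : γ < 1 := Real.rpow_lt_one hc0.le hc1' (by positivity)
  have hγh : γ ^ h = c := by
    rw [hγdef, ← Real.rpow_mul hc0.le, one_div_mul_cancel (ne_of_gt hh0), Real.rpow_one]
  -- Bernoulli: 1 + h*(γ-1) ≤ γ^h
  have hbern : 1 + h * (γ - 1) ≤ γ ^ h := by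
    have := one_add_mul_self_le_rpow_one_add (s := γ - 1)
      (by linarith) (p := h) hh
    simpa using this
  have hgap : 1/(2*h) ≤ 1 - γ := by
    rw [hγh] at hbern
    rw [div_le_iff₀ (by positivity)]
    nlinarith
  have h16 : (0:ℝ) < 16 * h / c := by positivity
  -- compute γ ^ (H+1)
  have hL : Real.log (1/c) = - Real.log c := by
    rw [one_div, Real.log_inv]
  have hexp : (1/h) * (h * Real.log (16 * h / c) / Real.log (1/c) + 1)
      = Real.log (16 * h / c) / (- Real.log c) + 1/h := by
    rw [hL]; field_simp
  have hkey : γ ^ (h * Real.log (16 * h / c) / Real.log (1 / c) + 1)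
      = (c / (16 * h)) * γ := by
    rw [hγdef, ← Real.rpow_mul hc0.le, hexp, Real.rpow_add hc0]
    congr 1
    rw [Real.rpow_def_of_pos hc0]
    rw [div_neg, mul_neg, ← mul_div_assoc,
      mul_div_cancel_left₀ _ hlogc', Real.exp_neg, Real.exp_log h16, inv_div]
  rw [hkey]
  rw [div_le_iff₀ (by linarith : (0:ℝ) < 1 - γ)]
  have h1 : c / (16 * h) * γ ≤ c / (16 * h) := by
    nlinarith [div_pos hc0 (by positivity : (0:ℝ) < 16 * h)]
  have h2 : c / (16 * h) = c / 8 * (1 / (2 * h)) := by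
    ring
  have h3 : c / 8 * (1 / (2 * h)) ≤ c / 8 * (1 - γ) := by
    apply mul_le_mul_of_nonneg_left hgap (by positivity)
  linarith
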